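/- Let t ∈ (0,1) with t ≠ 1 and μ₁ = μ₂ = 0. For every ρ ∈ (0,1), the function Q has derivative at ρ equal to (π√(1−ρ²))^{−1} · [ exp(−z_{t/2}²/(1+ρ)) − exp(−z_{t/2}²/(1−ρ)) ], and this derivative is strictly positive. -/

import Mathlib

open MeasureTheory Real Set Filter Asymptotics

/-- Standard normal density. -/
noncomputable def stdPDF (x : ℝ) : ℝ := (Real.sqrt (2 * Real.pi))⁻¹ * Real.exp (-x ^ 2 / 2)

/-- Standard normal CDF. -/
noncomputable def stdCDF (x : ℝ) : ℝ := ∫ u in Set.Iio x, stdPDF u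

/-- Bivariate normal density with means `μ₁ μ₂`, unit variances, correlation `ρ`. -/
noncomputable def bvnPDF (μ₁ μ₂ ρ x y : ℝ) : ℝ :=
  (2 * Real.pi * Real.sqrt (1 - ρ ^ 2))⁻¹ *
    Real.exp (-((x - μ₁) ^ 2 - 2 * ρ * (x - μ₁) * (y - μ₂) + (y - μ₂) ^ 2) / (2 * (1 - ρ ^ 2)))

/-- `Q(ρ)`: probability both coordinates exceed `|z|` in absolute value. -/
noncomputable def quadProb (μ₁ μ₂ z ρ : ℝ) : ℝ :=
  ∫ p in {p : ℝ × ℝ | |z| < |p.1| ∧ |z| < |p.2|}, bvnPDF μ₁ μ₂ ρ p.1 p.2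

/-- `Cov(ρ)`: covariance of the two-sided rejection indicators. -/
noncomputable def covInd (μ₁ μ₂ z ρ : ℝ) : ℝ :=
  quadProb μ₁ μ₂ z ρ -
    (stdCDF (z + μ₁) + stdCDF (z - μ₁)) * (stdCDF (z + μ₂) + stdCDF (z - μ₂))

lemma bvn_prod {r : ℝ} (hr : r ^ 2 < 1) (x y : ℝ) :
    bvnPDF 0 0 r x y = stdPDF x *
      ((Real.sqrt (2 * Real.pi * (1 - r ^ 2)))⁻¹ * Real.exp (-(y - r * x) ^ 2 / (2 * (1 - r ^ 2)))) := by
  have h1 : (0:ℝ) < 1 - r ^ 2 := by linarith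
  have hπ : (0:ℝ) < 2 * Real.pi := by positivity
  have hexp : Real.exp (-x^2/2) * Real.exp (-(y-r*x)^2/(2*(1-r^2)))
      = Real.exp (-((x-0)^2 - 2*r*(x-0)*(y-0) + (y-0)^2)/(2*(1-r^2))) := by
    rw [← Real.exp_add]; congr 1; field_simp; ring
  have hs : (Real.sqrt (2*Real.pi))⁻¹ * (Real.sqrt (2*Real.pi*(1-r^2)))⁻¹
      = (2*Real.pi*Real.sqrt (1-r^2))⁻¹ := by
    rw [← mul_inv, ← Real.sqrt_mul hπ.le,
      show 2 * Real.pi * (2 * Real.pi * (1 - r ^ 2)) = (2 * Real.pi) ^ 2 * (1 - r ^ 2) by ring,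
      Real.sqrt_mul (by positivity), Real.sqrt_sq hπ.le]
  unfold bvnPDF stdPDF
  rw [← hs, ← hexp]; ring

-- symmetry
lemma bvn_symm (r x y : ℝ) : bvnPDF 0 0 r x y = bvnPDF 0 0 r y x := by
  unfold bvnPDF; ring_nf

lemma bvn_neg (r x y : ℝ) : bvnPDF 0 0 r (-x) (-y) = bvnPDF 0 0 r x y := by
  unfold bvnPDF; ring_nf
noncomputable def bvnP (r x y : ℝ) : ℝ :=
  bvnPDF 0 0 r x y * (r*(1-r^2) + x*y*(1+r^2) - r*(x^2+y^2)) / (1-r^2)^2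

noncomputable def bvnH (r x y : ℝ) : ℝ := bvnPDF 0 0 r x y * (r*y - x) / (1-r^2)

lemma hasDerivAt_bvn_rho {r : ℝ} (h1 : 0 < 1 - r ^ 2) (x y : ℝ) :
    HasDerivAt (fun r => bvnPDF 0 0 r x y) (bvnP r x y) r := by
  have hsne : Real.sqrt (1 - r ^ 2) ≠ 0 := by positivity
  have hAne : 2 * Real.pi * Real.sqrt (1 - r ^ 2) ≠ 0 := by positivity
  have hDne : 2 * (1 - r ^ 2) ≠ 0 := by positivity
  have hsq : HasDerivAt (fun r : ℝ => 1 - r ^ 2) (-(2 * r)) r := by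
    simpa using (hasDerivAt_pow 2 r).const_sub 1
  have hsqrt : HasDerivAt (fun r : ℝ => Real.sqrt (1 - r ^ 2))
      (1 / (2 * Real.sqrt (1 - r ^ 2)) * -(2 * r)) r :=
    (Real.hasDerivAt_sqrt h1.ne').comp r hsq
  have hA : HasDerivAt (fun r : ℝ => (2 * Real.pi * Real.sqrt (1 - r ^ 2))⁻¹)
      (-(2 * Real.pi * (1 / (2 * Real.sqrt (1 - r ^ 2)) * -(2 * r))) /
        (2 * Real.pi * Real.sqrt (1 - r ^ 2)) ^ 2) r :=
    (hsqrt.const_mul (2 * Real.pi)).inv hAne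
  have key : -(2 * Real.pi * (1 / (2 * Real.sqrt (1 - r ^ 2)) * -(2 * r))) /
        (2 * Real.pi * Real.sqrt (1 - r ^ 2)) ^ 2
      = (2 * Real.pi * Real.sqrt (1 - r ^ 2))⁻¹ * (r / (1 - r ^ 2)) := by
    have h2 : (2 * Real.pi * Real.sqrt (1 - r ^ 2)) ^ 2 = (2 * Real.pi) ^ 2 * (1 - r ^ 2) := by
      rw [mul_pow, Real.sq_sqrt h1.le]
    rw [h2]
    field_simp
  rw [key] at hA
  have hN : HasDerivAt (fun s : ℝ => -((x - 0) ^ 2 - 2 * s * (x - 0) * (y - 0) + (y - 0) ^ 2))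
      (2 * x * y) r := by
    have h := (((hasDerivAt_id r).const_mul (2 * (x - 0) * (y - 0))).const_sub
      ((x - 0) ^ 2 + (y - 0) ^ 2)).neg
    have h2 : HasDerivAt (fun s : ℝ => -((x - 0) ^ 2 - 2 * s * (x - 0) * (y - 0) + (y - 0) ^ 2))
        (- -(2 * (x - 0) * (y - 0) * 1)) r :=
      h.congr_of_eventuallyEq (Filter.Eventually.of_forall fun s => by simp only [id_eq, Pi.neg_apply]; ring)
    convert h2 using 1
    ring
  have hD : HasDerivAt (fun r : ℝ => 2 * (1 - r ^ 2)) (2 * -(2 * r)) r := hsq.const_mul 2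
  have hE := hN.div hD hDne
  have h := hA.mul hE.exp
  exact h.congr_deriv (by unfold bvnP bvnPDF; simp only [Pi.div_apply]; field_simp; ring)

lemma hasDerivAt_bvn_x {r : ℝ} (h1 : 0 < 1 - r ^ 2) (x y : ℝ) :
    HasDerivAt (fun x => bvnPDF 0 0 r x y) (bvnH r x y) x := by
  have hDne : 2 * (1 - r ^ 2) ≠ 0 := by positivity
  have hN : HasDerivAt (fun x : ℝ => -((x - 0) ^ 2 - 2 * r * (x - 0) * (y - 0) + (y - 0) ^ 2))
      (-(2 * x - 2 * r * y)) x := by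
    have h := (((((hasDerivAt_id x).sub_const 0).pow 2).sub
      (((hasDerivAt_id x).sub_const 0).const_mul (2 * r * (y - 0)))).add_const ((y - 0) ^ 2)).neg
    have h2 : HasDerivAt (fun s : ℝ => -((s - 0) ^ 2 - 2 * r * (s - 0) * (y - 0) + (y - 0) ^ 2))
        (-(↑2 * (x - 0) ^ (2 - 1) * 1 - 2 * r * (y - 0) * 1)) x :=
      h.congr_of_eventuallyEq (Filter.Eventually.of_forall fun s => by simp only [id_eq, Pi.neg_apply, Pi.sub_apply, Pi.pow_apply]; ring)
    convert h2 using 1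
    push_cast
    ring
  have hE : HasDerivAt (fun x : ℝ =>
      -((x - 0) ^ 2 - 2 * r * (x - 0) * (y - 0) + (y - 0) ^ 2) / (2 * (1 - r ^ 2)))
      (-(2 * x - 2 * r * y) / (2 * (1 - r ^ 2))) x := hN.div_const _
  have h := hE.exp.const_mul ((2 * Real.pi * Real.sqrt (1 - r ^ 2))⁻¹)
  exact h.congr_deriv (by unfold bvnH bvnPDF; field_simp; ring)

lemma hasDerivAt_bvnH_y {r : ℝ} (h1 : 0 < 1 - r ^ 2) (x y : ℝ) :
    HasDerivAt (fun y => bvnH r x y) (bvnP r x y) y := by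
  have hDne : 2 * (1 - r ^ 2) ≠ 0 := by positivity
  have hN : HasDerivAt (fun y : ℝ => -((x - 0) ^ 2 - 2 * r * (x - 0) * (y - 0) + (y - 0) ^ 2))
      (-(2 * y - 2 * r * x)) y := by
    have h := (((((hasDerivAt_id y).sub_const 0).pow 2).sub
      (((hasDerivAt_id y).sub_const 0).const_mul (2 * r * (x - 0)))).add_const ((x - 0) ^ 2)).neg
    have h2 : HasDerivAt (fun s : ℝ => -((x - 0) ^ 2 - 2 * r * (x - 0) * (s - 0) + (s - 0) ^ 2))
        (-(↑2 * (y - 0) ^ (2 - 1) * 1 - 2 * r * (x - 0) * 1)) y :=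
      h.congr_of_eventuallyEq (Filter.Eventually.of_forall fun s => by simp only [id_eq, Pi.neg_apply, Pi.sub_apply, Pi.pow_apply]; ring)
    convert h2 using 1
    push_cast
    ring
  have hE : HasDerivAt (fun y : ℝ =>
      -((x - 0) ^ 2 - 2 * r * (x - 0) * (y - 0) + (y - 0) ^ 2) / (2 * (1 - r ^ 2)))
      (-(2 * y - 2 * r * x) / (2 * (1 - r ^ 2))) y := hN.div_const _
  have hF : HasDerivAt (fun y => bvnPDF 0 0 r x y)
      ((2 * Real.pi * Real.sqrt (1 - r ^ 2))⁻¹ *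
        (Real.exp (-((x - 0) ^ 2 - 2 * r * (x - 0) * (y - 0) + (y - 0) ^ 2) / (2 * (1 - r ^ 2))) *
          (-(2 * y - 2 * r * x) / (2 * (1 - r ^ 2))))) y :=
    hE.exp.const_mul _
  have hL : HasDerivAt (fun y : ℝ => (r * y - x) / (1 - r ^ 2)) (r / (1 - r ^ 2)) y := by
    have h := (((hasDerivAt_id y).const_mul r).sub_const x).div_const (1 - r ^ 2)
    exact h.congr_deriv (by ring)
  have h := hF.mul hL
  have h2 := h.congr_of_eventuallyEq (Filter.Eventually.of_forall
    (fun s => by unfold bvnH; simp only [Pi.mul_apply]; ring) : (fun y => bvnH r x y) =ᶠ[nhds y] _)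
  exact h2.congr_deriv (by unfold bvnP bvnPDF; field_simp; ring)
lemma cont_bvn (r : ℝ) : Continuous fun p : ℝ × ℝ => bvnPDF 0 0 r p.1 p.2 := by
  unfold bvnPDF; fun_prop

lemma cont_bvnP (r : ℝ) : Continuous fun p : ℝ × ℝ => bvnP r p.1 p.2 := by
  unfold bvnP bvnPDF; fun_prop

lemma cont_bvnP_y (r x : ℝ) : Continuous fun y : ℝ => bvnP r x y := by
  unfold bvnP bvnPDF; fun_prop

lemma cont_bvnH_x (r y : ℝ) : Continuous fun x : ℝ => bvnH r x y := by
  unfold bvnH bvnPDF; fun_prop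

lemma square_integral {r : ℝ} (h1 : 0 < 1 - r ^ 2) (c : ℝ) (hc : 0 ≤ c) :
    ∫ p in Icc (-c) c ×ˢ Icc (-c) c, bvnP r p.1 p.2
      = 2 * (bvnPDF 0 0 r c c - bvnPDF 0 0 r c (-c)) := by
  have hcc : -c ≤ c := by linarith
  have hint : IntegrableOn (fun p : ℝ × ℝ => bvnP r p.1 p.2) (Icc (-c) c ×ˢ Icc (-c) c) :=
    (cont_bvnP r).continuousOn.integrableOn_compact (isCompact_Icc.prod isCompact_Icc)
  rw [Measure.volume_eq_prod] at hint ⊢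
  rw [setIntegral_prod _ hint]
  have inner : ∀ x : ℝ, ∫ y in Icc (-c) c, bvnP r x y = bvnH r x c - bvnH r x (-c) := by
    intro x
    rw [integral_Icc_eq_integral_Ioc, ← intervalIntegral.integral_of_le hcc]
    exact intervalIntegral.integral_eq_sub_of_hasDerivAt
      (fun y _ => hasDerivAt_bvnH_y h1 x y)
      ((cont_bvnP_y r x).intervalIntegrable _ _)
  simp_rw [inner]
  have outer : ∫ x in Icc (-c) c, (bvnH r x c - bvnH r x (-c))
      = (bvnPDF 0 0 r c c - bvnPDF 0 0 r (-c) c)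
        - (bvnPDF 0 0 r c (-c) - bvnPDF 0 0 r (-c) (-c)) := by
    rw [integral_Icc_eq_integral_Ioc, ← intervalIntegral.integral_of_le hcc]
    have h1' := intervalIntegral.integral_eq_sub_of_hasDerivAt
      (fun x _ => hasDerivAt_bvn_x h1 x c) ((cont_bvnH_x r c).intervalIntegrable (-c) c)
    have h2' := intervalIntegral.integral_eq_sub_of_hasDerivAt
      (fun x _ => hasDerivAt_bvn_x h1 x (-c)) ((cont_bvnH_x r (-c)).intervalIntegrable (-c) c)
    rw [intervalIntegral.integral_sub ((cont_bvnH_x r c).intervalIntegrable _ _)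
      ((cont_bvnH_x r (-c)).intervalIntegrable _ _), h1', h2']
  rw [outer, bvn_neg r c c]
  have hs : bvnPDF 0 0 r (-c) c = bvnPDF 0 0 r c (-c) := by
    rw [← bvn_neg r (-c) c, neg_neg]
  rw [hs]; ring
section
variable {f : ℝ × ℝ → ℝ}

lemma setIntegral_split (hf : Integrable f) {A B : Set (ℝ × ℝ)}
    (hA : MeasurableSet A) (hB : MeasurableSet B) :
    ∫ p in Aᶜ ∩ Bᶜ, f p = (∫ p, f p) - (∫ p in A, f p) - (∫ p in B, f p)
      + ∫ p in A ∩ B, f p := by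
  have hsplit : ∀ s : Set (ℝ × ℝ), MeasurableSet s → ∀ t : Set (ℝ × ℝ), MeasurableSet t →
      ∫ p in s, f p = (∫ p in s ∩ t, f p) + ∫ p in s ∩ tᶜ, f p := by
    intro s hs t ht
    rw [← integral_add_compl ht (hf.restrict (s := s)), Measure.restrict_restrict ht,
      Measure.restrict_restrict ht.compl, inter_comm t s, inter_comm tᶜ s]
  have h0 := integral_add_compl hA hf
  have h1 := hsplit A hA B hB
  have h2 := hsplit Aᶜ hA.compl B hB
  have h4 := hsplit B hB A hA
  rw [inter_comm B A, inter_comm B Aᶜ] at h4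
  linarith [h0, h1, h2, h4]
end

lemma gauss_shift {s : ℝ} (hs : 0 < s) (a : ℝ) :
    ∫ y : ℝ, Real.exp (-(y - a) ^ 2 / (2 * s)) = Real.sqrt (2 * Real.pi * s) := by
  rw [integral_sub_right_eq_self (μ := volume) (fun y => Real.exp (-y ^ 2 / (2 * s))) a]
  have : ∀ y : ℝ, -y ^ 2 / (2 * s) = -(2 * s)⁻¹ * y ^ 2 := fun y => by ring
  simp_rw [this, integral_gaussian]
  congr 1
  field_simp

lemma marginal {r : ℝ} (h1 : 0 < 1 - r ^ 2) (x : ℝ) :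
    ∫ y : ℝ, bvnPDF 0 0 r x y = stdPDF x := by
  have hr : r ^ 2 < 1 := by linarith
  simp_rw [bvn_prod hr x]
  rw [integral_const_mul, integral_const_mul, gauss_shift h1 (r * x),
    inv_mul_cancel₀ (by positivity), mul_one]

lemma bvn_integrable {r : ℝ} (h0 : 0 < r) (h1 : 0 < 1 - r ^ 2) :
    Integrable (fun p : ℝ × ℝ => bvnPDF 0 0 r p.1 p.2) := by
  have hr1 : r < 1 := by nlinarith
  set a : ℝ := (1 - r) / (2 * (1 - r ^ 2)) with ha_def
  have ha : 0 < a := div_pos (by linarith) (by linarith)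
  have hbound : ∀ p : ℝ × ℝ, ‖bvnPDF 0 0 r p.1 p.2‖ ≤
      (2 * Real.pi * Real.sqrt (1 - r ^ 2))⁻¹ *
        (Real.exp (-a * p.1 ^ 2) * Real.exp (-a * p.2 ^ 2)) := by
    rintro ⟨x, y⟩
    have hkey : 2 * r * (x * y) ≤ r * (x ^ 2 + y ^ 2) := by
      nlinarith [sq_nonneg (x - y), sq_nonneg (x + y)]
    have hE : -((x - 0) ^ 2 - 2 * r * (x - 0) * (y - 0) + (y - 0) ^ 2) / (2 * (1 - r ^ 2))
        ≤ -a * x ^ 2 + -a * y ^ 2 := by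
      have hD : (0:ℝ) < 2 * (1 - r ^ 2) := by linarith
      have hnum : (1 - r) * (x ^ 2 + y ^ 2)
          ≤ (x - 0) ^ 2 - 2 * r * (x - 0) * (y - 0) + (y - 0) ^ 2 := by nlinarith [hkey]
      have h2 : -a * x ^ 2 + -a * y ^ 2 = -((1 - r) * (x ^ 2 + y ^ 2)) / (2 * (1 - r ^ 2)) := by
        rw [ha_def]; field_simp; ring
      rw [h2, div_le_div_iff₀ hD hD]
      nlinarith [mul_nonneg (sub_nonneg.2 hnum) hD.le]
    have hnn : 0 ≤ bvnPDF 0 0 r x y := by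
      unfold bvnPDF; positivity
    rw [Real.norm_eq_abs, abs_of_nonneg hnn]
    unfold bvnPDF
    rw [← Real.exp_add]
    exact mul_le_mul_of_nonneg_left (Real.exp_le_exp.mpr hE) (by positivity)
  have hg : Integrable (fun p : ℝ × ℝ =>
      (2 * Real.pi * Real.sqrt (1 - r ^ 2))⁻¹ *
        (Real.exp (-a * p.1 ^ 2) * Real.exp (-a * p.2 ^ 2))) := by
    rw [Measure.volume_eq_prod]
    exact ((integrable_exp_neg_mul_sq ha).mul_prod (integrable_exp_neg_mul_sq ha)).const_mul _
  exact hg.mono' (cont_bvn r).aestronglyMeasurable (Filter.Eventually.of_forall hbound)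

lemma stdPDF_total : ∫ x : ℝ, stdPDF x = 1 := by
  unfold stdPDF
  rw [integral_const_mul]
  have : ∀ y : ℝ, -y ^ 2 / 2 = -(y - 0) ^ 2 / (2 * 1) := fun y => by ring
  simp_rw [this, gauss_shift one_pos 0, mul_one]
  rw [inv_mul_cancel₀ (by positivity)]

lemma bvn_total {r : ℝ} (h0 : 0 < r) (h1 : 0 < 1 - r ^ 2) :
    ∫ p : ℝ × ℝ, bvnPDF 0 0 r p.1 p.2 = 1 := by
  have hi := bvn_integrable h0 h1
  rw [Measure.volume_eq_prod] at hi ⊢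
  rw [integral_prod _ hi]
  simp_rw [marginal h1]
  exact stdPDF_total

lemma strip_x {r : ℝ} (h0 : 0 < r) (h1 : 0 < 1 - r ^ 2) (c : ℝ) :
    ∫ p in Icc (-c) c ×ˢ (univ : Set ℝ), bvnPDF 0 0 r p.1 p.2
      = ∫ x in Icc (-c) c, stdPDF x := by
  have hi := (bvn_integrable h0 h1).integrableOn (s := Icc (-c) c ×ˢ (univ : Set ℝ))
  rw [Measure.volume_eq_prod] at hi ⊢
  rw [setIntegral_prod _ hi]
  congr 1
  ext x
  rw [setIntegral_univ, marginal h1]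

lemma strip_y {r : ℝ} (h0 : 0 < r) (h1 : 0 < 1 - r ^ 2) (c : ℝ) :
    ∫ p in (univ : Set ℝ) ×ˢ Icc (-c) c, bvnPDF 0 0 r p.1 p.2
      = ∫ x in Icc (-c) c, stdPDF x := by
  have hswap : (univ : Set ℝ) ×ˢ Icc (-c) c
      = Prod.swap ⁻¹' (Icc (-c) c ×ˢ (univ : Set ℝ)) := by
    ext p; simp [and_comm]
  rw [hswap, Measure.volume_eq_prod]
  have h := (Measure.measurePreserving_swap (μ := (volume : Measure ℝ))
    (ν := (volume : Measure ℝ))).setIntegral_preimage_emb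
    MeasurableEquiv.prodComm.measurableEmbedding
    (fun p : ℝ × ℝ => bvnPDF 0 0 r p.1 p.2) (Icc (-c) c ×ˢ (univ : Set ℝ))
  simp_rw [Prod.fst_swap, Prod.snd_swap] at h
  have heq : ∀ p : ℝ × ℝ, bvnPDF 0 0 r p.2 p.1 = bvnPDF 0 0 r p.1 p.2 := fun p => bvn_symm r p.2 p.1
  simp_rw [heq] at h
  rw [h, ← Measure.volume_eq_prod, strip_x h0 h1]

lemma quad_eq {r : ℝ} (z : ℝ) (h0 : 0 < r) (h1 : 0 < 1 - r ^ 2) :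
    quadProb 0 0 z r = 1 - 2 * (∫ x in Icc (-|z|) |z|, stdPDF x)
      + ∫ p in Icc (-|z|) |z| ×ˢ Icc (-|z|) |z|, bvnPDF 0 0 r p.1 p.2 := by
  set c := |z| with hc
  have hA : MeasurableSet (Icc (-c) c ×ˢ (univ : Set ℝ)) :=
    measurableSet_Icc.prod MeasurableSet.univ
  have hB : MeasurableSet ((univ : Set ℝ) ×ˢ Icc (-c) c) :=
    MeasurableSet.univ.prod measurableSet_Icc
  have hset : {p : ℝ × ℝ | |z| < |p.1| ∧ |z| < |p.2|}
      = (Icc (-c) c ×ˢ (univ : Set ℝ))ᶜ ∩ ((univ : Set ℝ) ×ˢ Icc (-c) c)ᶜ := by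
    ext p
    simp only [mem_setOf_eq, mem_inter_iff, mem_compl_iff, mem_prod, mem_univ, and_true,
      true_and, mem_Icc, ← abs_le, not_le, ← hc]
  unfold quadProb
  rw [hset, setIntegral_split (bvn_integrable h0 h1) hA hB, bvn_total h0 h1,
    strip_x h0 h1, strip_y h0 h1]
  have hI : (Icc (-c) c ×ˢ (univ : Set ℝ)) ∩ ((univ : Set ℝ) ×ˢ Icc (-c) c)
      = Icc (-c) c ×ˢ Icc (-c) c := by
    rw [prod_inter_prod, inter_univ, univ_inter]
  rw [hI]; ring

lemma bvnP_bound {b r x y c : ℝ} (hb0 : 0 < b) (hb1 : b < 1) (hr : |r| ≤ b)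
    (hx : |x| ≤ c) (hy : |y| ≤ c) :
    ‖bvnP r x y‖ ≤ (2 * Real.pi * Real.sqrt (1 - b ^ 2))⁻¹ * (1 + 4 * c ^ 2) / (1 - b ^ 2) ^ 2 := by
  have hb2 : 0 < 1 - b ^ 2 := by nlinarith
  have hr2 : r ^ 2 ≤ b ^ 2 := by nlinarith [sq_abs r, abs_nonneg r]
  have h1 : 0 < 1 - r ^ 2 := by nlinarith
  have hc0 : 0 ≤ c := le_trans (abs_nonneg x) hx
  have hxy : |x * y| ≤ c ^ 2 := by
    rw [abs_mul]
    calc |x| * |y| ≤ c * c := mul_le_mul hx hy (abs_nonneg y) hc0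
    _ = c ^ 2 := by ring
  have hx2 : x ^ 2 ≤ c ^ 2 := by nlinarith [sq_abs x, abs_nonneg x]
  have hy2 : y ^ 2 ≤ c ^ 2 := by nlinarith [sq_abs y, abs_nonneg y]
  have hrr := abs_le.mp hr
  have hxyr := abs_le.mp hxy
  have hpoly : |r * (1 - r ^ 2) + x * y * (1 + r ^ 2) - r * (x ^ 2 + y ^ 2)| ≤ 1 + 4 * c ^ 2 := by
    have h1' : |r * (1 - r ^ 2)| ≤ 1 := by
      rw [abs_mul, abs_of_pos h1]
      nlinarith [abs_nonneg r]
    have h2' : |x * y * (1 + r ^ 2)| ≤ 2 * c ^ 2 := by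
      rw [abs_mul, abs_of_pos (by positivity : (0:ℝ) < 1 + r ^ 2)]
      nlinarith [abs_nonneg (x * y), sq_nonneg r]
    have h3' : |r * (x ^ 2 + y ^ 2)| ≤ 2 * c ^ 2 := by
      rw [abs_mul, abs_of_nonneg (by positivity : (0:ℝ) ≤ x ^ 2 + y ^ 2)]
      nlinarith [abs_nonneg r, sq_nonneg x, sq_nonneg y]
    calc |r * (1 - r ^ 2) + x * y * (1 + r ^ 2) - r * (x ^ 2 + y ^ 2)|
        ≤ |r * (1 - r ^ 2) + x * y * (1 + r ^ 2)| + |r * (x ^ 2 + y ^ 2)| := abs_sub _ _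
      _ ≤ |r * (1 - r ^ 2)| + |x * y * (1 + r ^ 2)| + |r * (x ^ 2 + y ^ 2)| := by
          linarith [abs_add_le (r * (1 - r ^ 2)) (x * y * (1 + r ^ 2))]
      _ ≤ 1 + 4 * c ^ 2 := by linarith
  have hpdf : |bvnPDF 0 0 r x y| ≤ (2 * Real.pi * Real.sqrt (1 - b ^ 2))⁻¹ := by
    have hEneg : -((x - 0) ^ 2 - 2 * r * (x - 0) * (y - 0) + (y - 0) ^ 2) / (2 * (1 - r ^ 2)) ≤ 0 := by
      apply div_nonpos_of_nonpos_of_nonneg _ (by linarith)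
      nlinarith [sq_nonneg (x - r * y), sq_nonneg y]
    have h1e : Real.exp (-((x - 0) ^ 2 - 2 * r * (x - 0) * (y - 0) + (y - 0) ^ 2) / (2 * (1 - r ^ 2))) ≤ 1 :=
      Real.exp_le_one_iff.mpr hEneg
    have hmono : (2 * Real.pi * Real.sqrt (1 - r ^ 2))⁻¹ ≤ (2 * Real.pi * Real.sqrt (1 - b ^ 2))⁻¹ := by
      apply inv_anti₀ (by positivity)
      have := Real.sqrt_le_sqrt (by linarith : 1 - b ^ 2 ≤ 1 - r ^ 2)
      nlinarith [Real.pi_pos]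
    have hnn : 0 ≤ bvnPDF 0 0 r x y := by unfold bvnPDF; positivity
    rw [abs_of_nonneg hnn]
    unfold bvnPDF
    calc (2 * Real.pi * Real.sqrt (1 - r ^ 2))⁻¹ *
          Real.exp (-((x - 0) ^ 2 - 2 * r * (x - 0) * (y - 0) + (y - 0) ^ 2) / (2 * (1 - r ^ 2)))
        ≤ (2 * Real.pi * Real.sqrt (1 - r ^ 2))⁻¹ * 1 := by
          apply mul_le_mul_of_nonneg_left h1e (by positivity)
      _ = (2 * Real.pi * Real.sqrt (1 - r ^ 2))⁻¹ := mul_one _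
      _ ≤ _ := hmono
  have hd : (1 - b ^ 2) ^ 2 ≤ (1 - r ^ 2) ^ 2 := by nlinarith
  unfold bvnP
  rw [Real.norm_eq_abs, abs_div, abs_mul, abs_of_pos (by positivity : (0:ℝ) < (1 - r ^ 2) ^ 2)]
  apply div_le_div₀ (by positivity) _ (by positivity) hd
  calc |bvnPDF 0 0 r x y| * |r * (1 - r ^ 2) + x * y * (1 + r ^ 2) - r * (x ^ 2 + y ^ 2)|
      ≤ (2 * Real.pi * Real.sqrt (1 - b ^ 2))⁻¹ * (1 + 4 * c ^ 2) :=
        mul_le_mul hpdf hpoly (abs_nonneg _) (by positivity)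

lemma hasDerivAt_S {ρ : ℝ} (hρ : ρ ∈ Ioo (0:ℝ) 1) (c : ℝ) (hc : 0 ≤ c) :
    HasDerivAt (fun r => ∫ p in Icc (-c) c ×ˢ Icc (-c) c, bvnPDF 0 0 r p.1 p.2)
      (∫ p in Icc (-c) c ×ˢ Icc (-c) c, bvnP ρ p.1 p.2) ρ := by
  obtain ⟨h0, h1'⟩ := hρ
  have h1 : 0 < 1 - ρ ^ 2 := by nlinarith
  set ε : ℝ := (1 - ρ) / 2 with hε
  have hε0 : 0 < ε := by simp only [hε]; linarith
  set b : ℝ := (1 + ρ) / 2 with hb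
  have hb1 : b < 1 := by simp only [hb]; linarith
  have hb0 : 0 < b := by simp only [hb]; linarith
  have hball : ∀ r ∈ Metric.ball ρ ε, |r| ≤ b ∧ 0 < 1 - r ^ 2 := by
    intro r hr
    rw [Metric.mem_ball, Real.dist_eq, abs_lt] at hr
    constructor
    · rw [abs_le]; constructor <;> simp only [hb, hε] at * <;> linarith
    · have : |r| ≤ b := by rw [abs_le]; constructor <;> simp only [hb, hε] at * <;> linarith
      have h2 : r ^ 2 ≤ b ^ 2 := by nlinarith [sq_abs r, abs_nonneg r]
      nlinarith
  set sq : Set (ℝ × ℝ) := Icc (-c) c ×ˢ Icc (-c) c with hsq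
  have hsqm : MeasurableSet sq := measurableSet_Icc.prod measurableSet_Icc
  have hμ : volume sq < ⊤ := (isCompact_Icc.prod isCompact_Icc).measure_lt_top
  have key := hasDerivAt_integral_of_dominated_loc_of_deriv_le
    (μ := volume.restrict sq)
    (F := fun r (p : ℝ × ℝ) => bvnPDF 0 0 r p.1 p.2)
    (F' := fun r (p : ℝ × ℝ) => bvnP r p.1 p.2)
    (x₀ := ρ)
    (bound := fun _ => (2 * Real.pi * Real.sqrt (1 - b ^ 2))⁻¹ * (1 + 4 * c ^ 2) / (1 - b ^ 2) ^ 2)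
    (Metric.ball_mem_nhds ρ hε0)
    (Filter.Eventually.of_forall fun r => ((cont_bvn r).aestronglyMeasurable).restrict)
    (((cont_bvn ρ).continuousOn.integrableOn_compact (isCompact_Icc.prod isCompact_Icc)))
    (((cont_bvnP ρ).aestronglyMeasurable).restrict)
    ?_ ?_ ?_
  · exact key.2
  · refine (ae_restrict_mem hsqm).mono fun p hp r hr => ?_
    obtain ⟨hpx, hpy⟩ := hp
    exact bvnP_bound hb0 hb1 (hball r hr).1 (abs_le.mpr (mem_Icc.mp hpx)) (abs_le.mpr (mem_Icc.mp hpy))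
  · rw [integrable_const_iff]
    right
    exact ⟨by rwa [Measure.restrict_apply_univ]⟩
  · exact Filter.Eventually.of_forall fun p r hr => hasDerivAt_bvn_rho (hball r hr).2 p.1 p.2

lemma stdPDF_integrable : Integrable stdPDF := by
  unfold stdPDF
  have h : ∀ x : ℝ, -x ^ 2 / 2 = -(2:ℝ)⁻¹ * x ^ 2 := fun x => by ring
  simp_rw [h]
  exact (integrable_exp_neg_mul_sq (by norm_num)).const_mul _

lemma stdCDF_zero : stdCDF 0 = 1 / 2 := by
  have htot := stdPDF_total
  have hsplit := integral_add_compl measurableSet_Iio (μ := volume) (s := Iio (0:ℝ)) stdPDF_integrable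
  rw [compl_Iio, integral_Ici_eq_integral_Ioi] at hsplit
  have hsym : ∫ x in Ioi (0:ℝ), stdPDF x = ∫ x in Iio (0:ℝ), stdPDF x := by
    have heven : ∀ x : ℝ, stdPDF (-x) = stdPDF x := fun x => by unfold stdPDF; rw [neg_pow]; norm_num
    have h2 : ∫ x in Ioi (0:ℝ), stdPDF x = ∫ x in Ioi (0:ℝ), stdPDF (-x) := by simp_rw [heven]
    rw [h2, integral_comp_neg_Ioi, neg_zero, integral_Iic_eq_integral_Iio]
  unfold stdCDF
  rw [hsym] at hsplit
  linarith

theorem statement17 (t z ρ : ℝ) (ht : t ∈ Set.Ioo (0 : ℝ) 1) (ht1 : t ≠ 1)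
    (hz : stdCDF z = t / 2) (hρ : ρ ∈ Set.Ioo (0 : ℝ) 1) :
    HasDerivAt (fun r => quadProb 0 0 z r)
      ((Real.pi * Real.sqrt (1 - ρ ^ 2))⁻¹ *
        (Real.exp (-z ^ 2 / (1 + ρ)) - Real.exp (-z ^ 2 / (1 - ρ)))) ρ ∧
    0 < (Real.pi * Real.sqrt (1 - ρ ^ 2))⁻¹ *
        (Real.exp (-z ^ 2 / (1 + ρ)) - Real.exp (-z ^ 2 / (1 - ρ))) := by

  obtain ⟨ht0, ht2⟩ := ht
  obtain ⟨hρ0, hρ1⟩ := hρ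
  have h1 : 0 < 1 - ρ ^ 2 := by nlinarith
  have hs : 0 < Real.sqrt (1 - ρ ^ 2) := Real.sqrt_pos.mpr h1
  have hzne : z ≠ 0 := by
    intro h; rw [h, stdCDF_zero] at hz; apply ht1; linarith
  have hz2 : 0 < z ^ 2 := by positivity
  set c := |z| with hc
  have hcpos : 0 < c := abs_pos.mpr hzne
  have hzz : c ^ 2 = z ^ 2 := by rw [hc, sq_abs]
  have hval : ∫ p in Icc (-c) c ×ˢ Icc (-c) c, bvnP ρ p.1 p.2
      = (Real.pi * Real.sqrt (1 - ρ ^ 2))⁻¹ *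
        (Real.exp (-z ^ 2 / (1 + ρ)) - Real.exp (-z ^ 2 / (1 - ρ))) := by
    rw [square_integral h1 c hcpos.le]
    have e1 : bvnPDF 0 0 ρ c c
        = (2 * Real.pi * Real.sqrt (1 - ρ ^ 2))⁻¹ * Real.exp (-z ^ 2 / (1 + ρ)) := by
      unfold bvnPDF
      congr 2
      rw [div_eq_div_iff (by positivity) (by linarith : (1:ℝ) + ρ ≠ 0)]
      linear_combination ((2 * ρ - 2) * (1 + ρ)) * hzz
    have e2 : bvnPDF 0 0 ρ c (-c)
        = (2 * Real.pi * Real.sqrt (1 - ρ ^ 2))⁻¹ * Real.exp (-z ^ 2 / (1 - ρ)) := by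
      unfold bvnPDF
      congr 2
      rw [div_eq_div_iff (by positivity) (by intro h; nlinarith : (1:ℝ) - ρ ≠ 0)]
      linear_combination ((-2 * ρ - 2) * (1 - ρ)) * hzz
    rw [e1, e2, ← mul_sub, ← mul_assoc]
    congr 1
    rw [mul_inv, mul_inv, mul_inv]
    field_simp
  refine ⟨?_, ?_⟩
  · have hS := hasDerivAt_S ⟨hρ0, hρ1⟩ c hcpos.le
    rw [hval] at hS
    have hK := hS.const_add (1 - 2 * (∫ x in Icc (-c) c, stdPDF x))
    apply hK.congr_of_eventuallyEq
    apply Filter.eventuallyEq_of_mem (isOpen_Ioo.mem_nhds (⟨hρ0, hρ1⟩ : ρ ∈ Ioo (0:ℝ) 1))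
    intro r hr
    have hr1 : 0 < 1 - r ^ 2 := by nlinarith [hr.1, hr.2]
    show quadProb 0 0 z r = _
    rw [quad_eq z hr.1 hr1]
  · have hexp : Real.exp (-z ^ 2 / (1 - ρ)) < Real.exp (-z ^ 2 / (1 + ρ)) := by
      apply Real.exp_lt_exp.mpr
      rw [neg_div, neg_div, neg_lt_neg_iff]
      exact div_lt_div_of_pos_left hz2 (by linarith) (by linarith)
    exact mul_pos (inv_pos.mpr (mul_pos Real.pi_pos hs)) (by linarith)
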